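/- For all positive integers ℓ, one has 2σ_{−2}(ℓ/4) − σ_{−2}(ℓ/2) + σ_{−2}(ℓ_o) ≥ 0, with equality if and only if ℓ ≡ 2 mod 4. Here σ_ν(m) = ∑_{d ∣ m} d^ν for positive integers m, with the convention σ_ν(m) = 0 when m is not a positive integer, and ℓ_o denotes the odd part of ℓ. -/

import Mathlib

/-- σ_ν(m) = ∑_{d ∣ m} d^ν as a rational number, for ν ∈ ℤ. -/
def sigmaZ (ν : ℤ) (m : ℕ) : ℚ := ∑ d ∈ m.divisors, (d : ℚ) ^ ν

open Finset ArithmeticFunction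
open scoped ArithmeticFunction.zeta

/-- The arithmetic function n ↦ n⁻²  -/
def invSqAF : ArithmeticFunction ℚ := ⟨fun n => ((n : ℚ) ^ 2)⁻¹, by simp⟩

lemma invSqAF_mult : ArithmeticFunction.IsMultiplicative invSqAF := by
  constructor
  · simp [invSqAF]
  · intro m n _
    show (((m * n : ℕ) : ℚ) ^ 2)⁻¹ = ((m : ℚ) ^ 2)⁻¹ * ((n : ℚ) ^ 2)⁻¹
    push_cast
    rw [mul_pow, mul_inv]

lemma sigmaZ_eq (m : ℕ) : sigmaZ (-2) m = (invSqAF * ζ) m := by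
  rw [ArithmeticFunction.coe_mul_zeta_apply]
  refine Finset.sum_congr rfl fun d _ => ?_
  show (d : ℚ) ^ (-2 : ℤ) = ((d : ℚ) ^ 2)⁻¹
  rw [zpow_neg]
  norm_cast

lemma sigmaZ_mul_coprime {m n : ℕ} (h : m.Coprime n) :
    sigmaZ (-2) (m * n) = sigmaZ (-2) m * sigmaZ (-2) n := by
  rw [sigmaZ_eq, sigmaZ_eq, sigmaZ_eq]
  exact (invSqAF_mult.mul (IsMultiplicative.natCast isMultiplicative_zeta)).map_mul_of_coprime h

lemma sigmaZ_two_pow (k : ℕ) :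
    sigmaZ (-2) (2 ^ k) = ∑ i ∈ Finset.range (k + 1), ((4 : ℚ) ^ i)⁻¹ := by
  unfold sigmaZ
  rw [Nat.divisors_prime_pow Nat.prime_two, Finset.sum_map]
  refine Finset.sum_congr rfl fun i _ => ?_
  show ((2 ^ i : ℕ) : ℚ) ^ (-2 : ℤ) = ((4 : ℚ) ^ i)⁻¹
  push_cast
  rw [zpow_neg, zpow_two, ← pow_add, show (4:ℚ) = 2^2 by norm_num, ← pow_mul]
  ring_nf

lemma sigmaZ_two_pow_ge_one (k : ℕ) : 1 ≤ sigmaZ (-2) (2 ^ k) := by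
  rw [sigmaZ_two_pow]
  calc (1 : ℚ) = ((4 : ℚ) ^ 0)⁻¹ := by norm_num
    _ ≤ _ := Finset.single_le_sum (f := fun i => ((4:ℚ)^i)⁻¹)
        (fun i _ => by positivity) (Finset.mem_range.mpr (Nat.succ_pos k))

lemma sigmaZ_pos {m : ℕ} (hm : 0 < m) : 0 < sigmaZ (-2) m := by
  unfold sigmaZ
  apply Finset.sum_pos
  · intro d hd
    have : 0 < d := Nat.pos_of_mem_divisors hd
    positivity
  · exact ⟨1, Nat.one_mem_divisors.mpr hm.ne'⟩

theorem sigma_combination_nonneg (ℓ : ℕ) (hℓ : 0 < ℓ) :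
    0 ≤ 2 * (if 4 ∣ ℓ then sigmaZ (-2) (ℓ / 4) else 0)
        - (if 2 ∣ ℓ then sigmaZ (-2) (ℓ / 2) else 0)
        + sigmaZ (-2) ((ℓ / 2 ^ ℓ.factorization 2)) ∧
    (2 * (if 4 ∣ ℓ then sigmaZ (-2) (ℓ / 4) else 0)
        - (if 2 ∣ ℓ then sigmaZ (-2) (ℓ / 2) else 0)
        + sigmaZ (-2) ((ℓ / 2 ^ ℓ.factorization 2)) = 0 ↔ ℓ % 4 = 2) := by
  set a := ℓ.factorization 2 with ha
  set o := ℓ / 2 ^ a with ho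
  have hℓ0 : ℓ ≠ 0 := hℓ.ne'
  have hfact : 2 ^ a * o = ℓ := Nat.ordProj_mul_ordCompl_eq_self ℓ 2
  have hodd : ¬ 2 ∣ o := Nat.not_dvd_ordCompl Nat.prime_two hℓ0
  have hopos : 0 < o := Nat.ordCompl_pos 2 hℓ0
  have hcop : ∀ k : ℕ, (2 ^ k).Coprime o :=
    fun k => Nat.Coprime.pow_left k ((Nat.coprime_two_left).mpr (Nat.odd_iff.mpr
      (Nat.two_dvd_ne_zero.mp hodd)))
  have ht : 0 < sigmaZ (-2) o := sigmaZ_pos hopos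
  have h2dvd : 2 ∣ ℓ ↔ 1 ≤ a := by
    constructor
    · intro h
      exact (Nat.Prime.pow_dvd_iff_le_factorization Nat.prime_two hℓ0).mp (by simpa using h)
    · intro h
      have : (2:ℕ) ^ 1 ∣ ℓ := (Nat.Prime.pow_dvd_iff_le_factorization Nat.prime_two hℓ0).mpr h
      simpa using this
  have h4dvd : 4 ∣ ℓ ↔ 2 ≤ a := by
    constructor
    · intro h
      exact (Nat.Prime.pow_dvd_iff_le_factorization Nat.prime_two hℓ0).mp (by norm_num at h ⊢; exact h)
    · intro h
      have := (Nat.Prime.pow_dvd_iff_le_factorization Nat.prime_two hℓ0).mpr h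
      norm_num at this ⊢
      exact this
  rcases Nat.lt_or_ge a 1 with h0 | h1
  · -- a = 0, ℓ odd
    interval_cases a
    have h2 : ¬ 2 ∣ ℓ := by rw [h2dvd]; omega
    have h4 : ¬ 4 ∣ ℓ := fun h => h2 (dvd_trans (by norm_num) h)
    rw [if_neg h2, if_neg h4]
    have hmod : ℓ % 2 = 1 := Nat.two_dvd_ne_zero.mp h2
    constructor
    · linarith
    · constructor
      · intro h; linarith
      · intro h; omega
  rcases Nat.lt_or_ge a 2 with h1' | h2'
  · -- a = 1, ℓ ≡ 2 mod 4
    have ha1 : a = 1 := by omega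
    have h2 : 2 ∣ ℓ := h2dvd.mpr h1
    have h4 : ¬ 4 ∣ ℓ := by rw [h4dvd]; omega
    have hl2 : ℓ / 2 = o := by
      rw [← hfact, ha1]; omega
    rw [if_pos h2, if_neg h4, hl2]
    have hmod : ℓ % 4 = 2 := by
      have : ℓ = 2 * o := by rw [← hfact, ha1]; ring
      have : o % 2 = 1 := Nat.two_dvd_ne_zero.mp hodd
      omega
    constructor
    · ring_nf; linarith [le_refl (sigmaZ (-2) o)]
    · constructor
      · intro _; exact hmod
      · intro _; ring
  · -- a ≥ 2
    obtain ⟨b, hb⟩ : ∃ b, a = b + 2 := ⟨a - 2, by omega⟩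
    have h2 : 2 ∣ ℓ := h2dvd.mpr (by omega)
    have h4 : 4 ∣ ℓ := h4dvd.mpr h2'
    have hl4 : ℓ / 4 = 2 ^ b * o := by
      have h : ℓ = 4 * (2 ^ b * o) := by rw [← hfact, hb]; ring
      rw [h, Nat.mul_div_cancel_left _ (by norm_num)]
    have hl2 : ℓ / 2 = 2 ^ (b + 1) * o := by
      have h : ℓ = 2 * (2 ^ (b + 1) * o) := by rw [← hfact, hb]; ring
      rw [h, Nat.mul_div_cancel_left _ (by norm_num)]
    rw [if_pos h2, if_pos h4, hl4, hl2,
      sigmaZ_mul_coprime (hcop b), sigmaZ_mul_coprime (hcop (b+1))]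
    have hstep : sigmaZ (-2) (2 ^ (b + 1)) = sigmaZ (-2) (2 ^ b) + ((4:ℚ) ^ (b+1))⁻¹ := by
      rw [sigmaZ_two_pow, sigmaZ_two_pow, Finset.sum_range_succ]
    have hs1 : 1 ≤ sigmaZ (-2) (2 ^ b) := sigmaZ_two_pow_ge_one b
    have hinv : ((4:ℚ) ^ (b+1))⁻¹ ≤ 1 := by
      rw [inv_le_one_iff₀]
      right
      exact one_le_pow₀ (by norm_num)
    have key : 0 < 2 * (sigmaZ (-2) (2 ^ b) * sigmaZ (-2) o)
        - sigmaZ (-2) (2 ^ (b+1)) * sigmaZ (-2) o + sigmaZ (-2) o := by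
      rw [hstep]
      have : 2 * (sigmaZ (-2) (2 ^ b) * sigmaZ (-2) o)
        - (sigmaZ (-2) (2 ^ b) + ((4:ℚ) ^ (b+1))⁻¹) * sigmaZ (-2) o + sigmaZ (-2) o
        = (sigmaZ (-2) (2 ^ b) + 1 - ((4:ℚ) ^ (b+1))⁻¹) * sigmaZ (-2) o := by ring
      rw [this]
      apply mul_pos _ ht
      linarith
    have hmod : ℓ % 4 ≠ 2 := by
      obtain ⟨c, hc⟩ := h4; omega
    exact ⟨le_of_lt key, by constructor <;> intro h <;> [linarith; exact absurd h hmod]⟩
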